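/- Let v : ℝ → ℝ be a C¹ solution on [t₀, ∞) of the scalar ODE v' = -a·v² + b·v·exp(-δ₁·(t-t₀)) + c·exp(-δ₂·(t-t₀)) with v(t₀) = v₀ ≥ 0, where a, b, c, δ₁, δ₂ > 0. Then v(t) ≥ 0 for all t ≥ t₀, v is bounded on [t₀, ∞), and lim_{t→∞} v(t) = 0. -/

import Mathlib

open Real Filter Topology

/-- Barrier lemma: if `f` has derivative `f'` on `[lo, hi]`, starts at or above `m`,
and has strictly positive derivative whenever it touches `m`, then it stays `≥ m`. -/
lemma lower_barrier (f f' : ℝ → ℝ) (lo hi m : ℝ)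
    (hd : ∀ t ∈ Set.Icc lo hi, HasDerivAt f (f' t) t)
    (h0 : m ≤ f lo)
    (hkey : ∀ t ∈ Set.Icc lo hi, f t = m → 0 < f' t) :
    ∀ t ∈ Set.Icc lo hi, m ≤ f t := by
  by_contra h
  push_neg at h
  obtain ⟨t₁, ht₁, hft₁⟩ := h
  have hlo_t₁ : lo ≤ t₁ := ht₁.1
  have hcont : ContinuousOn f (Set.Icc lo t₁) := fun t ht =>
    ((hd t ⟨ht.1, ht.2.trans ht₁.2⟩).continuousAt).continuousWithinAt
  set S : Set ℝ := Set.Icc lo t₁ ∩ f ⁻¹' Set.Ici m with hS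
  have hSne : S.Nonempty := ⟨lo, ⟨le_refl lo, hlo_t₁⟩, h0⟩
  have hSbdd : BddAbove S := ⟨t₁, fun x hx => hx.1.2⟩
  have hSclosed : IsClosed S :=
    hcont.preimage_isClosed_of_isClosed isClosed_Icc isClosed_Ici
  have hsS : sSup S ∈ S := hSclosed.csSup_mem hSne hSbdd
  set s := sSup S with hs_def
  have hs_icc : s ∈ Set.Icc lo t₁ := hsS.1
  have hfs_ge : m ≤ f s := hsS.2
  have hs_hi : s ∈ Set.Icc lo hi := ⟨hs_icc.1, hs_icc.2.trans ht₁.2⟩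
  have hs_ne : s ≠ t₁ := by
    intro h
    rw [h] at hfs_ge
    exact absurd hft₁ (not_lt.2 hfs_ge)
  have hs_lt : s < t₁ := lt_of_le_of_ne hs_icc.2 hs_ne
  have hright : ∀ t ∈ Set.Ioc s t₁, f t < m := by
    intro t ht
    by_contra hge
    push_neg at hge
    have htS : t ∈ S := ⟨⟨hs_icc.1.trans ht.1.le, ht.2⟩, hge⟩
    exact absurd (le_csSup hSbdd htS) (not_le.2 ht.1)
  have hIoc_mem : Set.Ioc s t₁ ∈ 𝓝[>] s :=
    Ioc_mem_nhdsGT_of_mem ⟨le_refl s, hs_lt⟩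
  have hfs_le : f s ≤ m := by
    have htend : Tendsto f (𝓝[>] s) (𝓝 (f s)) :=
      ((hd s hs_hi).continuousAt).tendsto.mono_left nhdsWithin_le_nhds
    refine le_of_tendsto htend ?_
    filter_upwards [hIoc_mem] with t ht
    exact (hright t ht).le
  have hfs : f s = m := le_antisymm hfs_le hfs_ge
  have hpos : 0 < f' s := hkey s hs_hi hfs
  have hslope : Tendsto (slope f s) (𝓝[≠] s) (𝓝 (f' s)) :=
    hasDerivAt_iff_tendsto_slope.1 (hd s hs_hi)
  have h1 : ∀ᶠ t in 𝓝[>] s, 0 < slope f s t := by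
    have h1' : ∀ᶠ t in 𝓝[≠] s, 0 < slope f s t :=
      hslope (Ioi_mem_nhds hpos)
    exact h1'.filter_mono (nhdsWithin_mono s fun x (hx : s < x) =>
      Set.mem_compl_singleton_iff.2 hx.ne')
  obtain ⟨t, hts, htIoc⟩ := (h1.and (eventually_of_mem hIoc_mem fun t ht => ht)).exists
  have hst : s < t := htIoc.1
  rw [slope_def_field] at hts
  have hnum : 0 < f t - f s := by
    rcases div_pos_iff.1 hts with ⟨h1, _⟩ | ⟨_, h2⟩
    · exact h1
    · linarith [sub_pos.2 hst]
  have : m < f t := by rw [hfs] at hnum; linarith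
  exact absurd (hright t htIoc) (not_lt.2 this.le)

set_option maxHeartbeats 1000000 in
theorem stmt0 (a b c δ₁ δ₂ t₀ v₀ : ℝ)
    (ha : 0 < a) (hb : 0 < b) (hc : 0 < c) (hδ₁ : 0 < δ₁) (hδ₂ : 0 < δ₂)
    (hv₀ : 0 ≤ v₀) (v : ℝ → ℝ)
    (hC1 : ContDiff ℝ 1 v)
    (hode : ∀ t, t₀ ≤ t → HasDerivAt v
      (-a * (v t) ^ 2 + b * v t * Real.exp (-δ₁ * (t - t₀)) + c * Real.exp (-δ₂ * (t - t₀))) t)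
    (hinit : v t₀ = v₀) :
    (∀ t, t₀ ≤ t → 0 ≤ v t) ∧
    (∃ M : ℝ, ∀ t, t₀ ≤ t → v t ≤ M) ∧
    Tendsto v atTop (nhds 0) := by
  set F : ℝ → ℝ := fun t =>
    -a * (v t) ^ 2 + b * v t * Real.exp (-δ₁ * (t - t₀)) + c * Real.exp (-δ₂ * (t - t₀))
    with hF
  -- Part 1: nonnegativity
  have hnonneg : ∀ t, t₀ ≤ t → 0 ≤ v t := by
    intro t ht
    refine lower_barrier v F t₀ t 0 (fun s hs => hode s hs.1) (hinit ▸ hv₀) ?_ t ⟨ht, le_refl t⟩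
    intro s hs hvs
    have hFs : F s = c * Real.exp (-δ₂ * (s - t₀)) := by simp [hF, hvs]
    rw [hFs]
    positivity
  -- Part 2: boundedness
  set M : ℝ := max (v₀ + 1) ((b + c + 1) / a + 1) with hM
  have hM1 : v₀ ≤ M := le_trans (by linarith) (le_max_left _ _)
  have hMge : (b + c + 1) / a ≤ M - 1 := by
    have := le_max_right (v₀ + 1) ((b + c + 1) / a + 1)
    linarith
  have hM_one : 1 ≤ M := by
    have h1 : 0 ≤ (b + c + 1) / a := by positivity
    linarith
  have hM_pos : 0 < M := lt_of_lt_of_le one_pos hM_one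
  have hMa : b * M + c < a * M ^ 2 := by
    have h2 : b + c + 1 ≤ a * M := by
      rw [div_le_iff₀ ha] at hMge
      nlinarith
    nlinarith
  have hbound : ∀ t, t₀ ≤ t → v t ≤ M := by
    intro t ht
    have := lower_barrier (fun s => -v s) (fun s => -F s) t₀ t (-M)
      (fun s hs => (hode s hs.1).neg) (by simp [hinit]; linarith)
      ?_ t ⟨ht, le_refl t⟩
    · linarith
    · intro s hs hvs
      have hvsM : v s = M := by linarith
      have he1 : Real.exp (-δ₁ * (s - t₀)) ≤ 1 := by
        rw [Real.exp_le_one_iff]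
        nlinarith [hs.1]
      have he2 : Real.exp (-δ₂ * (s - t₀)) ≤ 1 := by
        rw [Real.exp_le_one_iff]
        nlinarith [hs.1]
      have he1' : 0 < Real.exp (-δ₁ * (s - t₀)) := Real.exp_pos _
      have he2' : 0 < Real.exp (-δ₂ * (s - t₀)) := Real.exp_pos _
      have hFs : F s = -a * M ^ 2 + b * M * Real.exp (-δ₁ * (s - t₀))
          + c * Real.exp (-δ₂ * (s - t₀)) := by simp [hF, hvsM]
      rw [hFs]
      nlinarith [mul_le_of_le_one_right (mul_pos hb hM_pos).le he1,
        mul_le_of_le_one_right hc.le he2]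
  refine ⟨hnonneg, ⟨M, hbound⟩, ?_⟩
  -- Part 3: convergence to zero
  set δ : ℝ := min δ₁ δ₂ with hδ
  have hδ_pos : 0 < δ := lt_min hδ₁ hδ₂
  have key : ∀ ε : ℝ, 0 < ε → ∀ᶠ t in atTop, v t ≤ ε := by
    intro ε hε
    set k : ℝ := a * ε ^ 2 / 2 with hk
    have hk_pos : 0 < k := by positivity
    -- find T₁ beyond which the perturbation is ≤ k
    have htend : Tendsto (fun t => (b * M + c) * Real.exp (-δ * (t - t₀))) atTop (𝓝 0) := by
      have h1 : Tendsto (fun t : ℝ => -δ * (t - t₀)) atTop atBot :=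
        (tendsto_const_mul_atBot_of_neg (by linarith : -δ < (0:ℝ))).mpr
          (tendsto_atTop_add_const_right _ _ tendsto_id)
      have h2 : Tendsto (fun t : ℝ => Real.exp (-δ * (t - t₀))) atTop (𝓝 0) :=
        Real.tendsto_exp_atBot.comp h1
      have h3 := Filter.Tendsto.const_mul (b * M + c) h2
      simpa using h3
    have hev : ∀ᶠ t in atTop, (b * M + c) * Real.exp (-δ * (t - t₀)) < k :=
      htend.eventually (Iio_mem_nhds hk_pos)
    obtain ⟨T₁', hT₁'⟩ := hev.exists_forall_of_atTop
    set T₁ : ℝ := max T₁' t₀ with hT₁def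
    have hT₁_t₀ : t₀ ≤ T₁ := le_max_right _ _
    have hT₁ : ∀ t, T₁ ≤ t → (b * M + c) * Real.exp (-δ * (t - t₀)) < k := fun t ht =>
      hT₁' t ((le_max_left _ _).trans ht)
    -- derivative bound while v ≥ ε
    have hFbound : ∀ t, T₁ ≤ t → ε ≤ v t → F t ≤ -k := by
      intro t ht hvt
      have ht₀ : t₀ ≤ t := hT₁_t₀.trans ht
      have hvt0 : 0 ≤ v t := hnonneg t ht₀
      have hvtM : v t ≤ M := hbound t ht₀
      have hsub : 0 ≤ t - t₀ := by linarith
      have he1 : Real.exp (-δ₁ * (t - t₀)) ≤ Real.exp (-δ * (t - t₀)) := by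
        apply Real.exp_le_exp.2
        nlinarith [min_le_left δ₁ δ₂]
      have he2 : Real.exp (-δ₂ * (t - t₀)) ≤ Real.exp (-δ * (t - t₀)) := by
        apply Real.exp_le_exp.2
        nlinarith [min_le_right δ₁ δ₂]
      have heδ : 0 < Real.exp (-δ * (t - t₀)) := Real.exp_pos _
      have he1' : 0 < Real.exp (-δ₁ * (t - t₀)) := Real.exp_pos _
      have hb1 : b * v t * Real.exp (-δ₁ * (t - t₀)) ≤ b * M * Real.exp (-δ * (t - t₀)) :=
        mul_le_mul (mul_le_mul_of_nonneg_left hvtM hb.le) he1 he1'.le (by positivity)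
      have hb2 : c * Real.exp (-δ₂ * (t - t₀)) ≤ c * Real.exp (-δ * (t - t₀)) :=
        mul_le_mul_of_nonneg_left he2 hc.le
      have hdistr : (b * M + c) * Real.exp (-δ * (t - t₀))
          = b * M * Real.exp (-δ * (t - t₀)) + c * Real.exp (-δ * (t - t₀)) := by ring
      have hsq' : ε ^ 2 ≤ (v t) ^ 2 := by nlinarith
      have hsq : a * ε ^ 2 ≤ a * (v t) ^ 2 := mul_le_mul_of_nonneg_left hsq' ha.le
      have hlt := hT₁ t ht
      have h2k : a * ε ^ 2 = 2 * k := by rw [hk]; ring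
      simp only [hF]
      linarith
    -- there is a time T ≥ T₁ with v T ≤ ε
    have hexT : ∃ T, T₁ ≤ T ∧ v T ≤ ε := by
      by_contra hcon
      push_neg at hcon
      set X : ℝ := T₁ + (M + 1) / k with hX
      have hX_T₁ : T₁ ≤ X := by
        rw [hX]
        have : 0 ≤ (M + 1) / k := by positivity
        linarith
      have hX_t₀ : t₀ ≤ X := hT₁_t₀.trans hX_T₁
      -- g = v + k * id is antitone on [T₁, X]
      have hg : AntitoneOn (fun t => v t + k * t) (Set.Icc T₁ X) := by
        apply antitoneOn_of_deriv_nonpos (convex_Icc _ _)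
        · exact (hC1.continuous.add (continuous_const.mul continuous_id)).continuousOn
        · intro x hx
          have hx' : x ∈ Set.Icc T₁ X := interior_subset hx
          exact ((hode x (hT₁_t₀.trans hx'.1)).add
            ((hasDerivAt_id x).const_mul k)).differentiableAt.differentiableWithinAt
        · intro x hx
          rw [interior_Icc] at hx
          have hx₁ : T₁ ≤ x := hx.1.le
          have hd : HasDerivAt (fun t => v t + k * t) (F x + k) x := by
            have h := (hode x (hT₁_t₀.trans hx₁)).add ((hasDerivAt_id x).const_mul k)
            rw [mul_one] at h
            exact h
          rw [hd.deriv]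
          have := hFbound x hx₁ (hcon x hx₁).le
          linarith
      have hineq := hg (Set.left_mem_Icc.2 hX_T₁) (Set.right_mem_Icc.2 hX_T₁) hX_T₁
      simp only at hineq
      have hkX : k * X = k * T₁ + (M + 1) := by
        rw [hX]
        field_simp
      have hvX : v X ≤ v T₁ - (M + 1) := by linarith
      have hvT₁ : v T₁ ≤ M := hbound T₁ hT₁_t₀
      have : v X < 0 := by linarith
      exact absurd this (not_lt.2 (hnonneg X hX_t₀))
    obtain ⟨T, hTT₁, hvT⟩ := hexT
    -- v stays ≤ ε after T
    rw [eventually_atTop]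
    refine ⟨T, fun t ht => ?_⟩
    have := lower_barrier (fun s => -v s) (fun s => -F s) T t (-ε)
      (fun s hs => (hode s ((hT₁_t₀.trans hTT₁).trans hs.1)).neg)
      (by linarith) ?_ t ⟨ht, le_refl t⟩
    · linarith
    · intro s hs hvs
      have hvsε : v s = ε := by linarith
      have := hFbound s (hTT₁.trans hs.1) hvsε.ge
      linarith
  rw [tendsto_order]
  constructor
  · intro x hx
    filter_upwards [eventually_ge_atTop t₀] with t ht
    exact lt_of_lt_of_le hx (hnonneg t ht)
  · intro x hx
    filter_upwards [key (x / 2) (by linarith)] with t ht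
    linarith
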